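/- Let a : ℝ → ℝ be continuous, almost periodic (in Bohr's sense), with inf a > 0, and let f : ℝ → ℝ be continuous, bounded, and almost periodic. Then the bounded solution x(t) = ∫_{-∞}^{t} exp(-∫_{s}^{t} a(u) du) f(s) ds of x' = -a(t)x + f(t) is almost periodic, and it is the unique bounded solution of this equation on ℝ. -/

import Mathlib

open MeasureTheory

/-- Bohr almost periodicity: for every `ε > 0` the set of `ε`-translation numbers
is relatively dense in `ℝ`. -/
def AlmostPeriodic (g : ℝ → ℝ) : Prop :=
  ∀ ε > 0, ∃ l > 0, ∀ a : ℝ, ∃ τ ∈ Set.Icc a (a + l), ∀ t : ℝ, |g (t + τ) - g t| < ε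

open Set Filter intervalIntegral

lemma aux_mul_atBot {m : ℝ} (hm : 0 < m) : Tendsto (fun s : ℝ => m * s) atBot atBot := by
  exact (tendsto_const_mul_atBot_of_pos hm).mpr tendsto_id

lemma aux_exp_intOn (m c : ℝ) (hm : 0 < m) :
    IntegrableOn (fun s => Real.exp (m * s)) (Set.Iic c) := by
  refine integrableOn_Iic_of_intervalIntegral_norm_bounded (Real.exp (m*c)/m) c
    (fun y => ((Real.continuous_exp.comp (continuous_const.mul continuous_id)).integrableOn_Ioc)) tendsto_id ?_
  filter_upwards with y
  rw [show (fun x => ‖Real.exp (m * x)‖) = fun x => Real.exp (m * x) by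
    funext x; exact Real.norm_of_nonneg (Real.exp_pos _).le]
  rw [intervalIntegral.integral_comp_mul_left (fun u => Real.exp u) hm.ne']
  rw [integral_exp]
  rw [smul_eq_mul]
  have := (Real.exp_pos (m*y)).le
  rw [div_eq_inv_mul]
  have h2 : Real.exp (m*c) - Real.exp (m*y) ≤ Real.exp (m*c) := by linarith
  exact mul_le_mul_of_nonneg_left h2 (by positivity)

lemma aux_exp_intVal (m c : ℝ) (hm : 0 < m) :
    ∫ s in Set.Iic c, Real.exp (m * s) = Real.exp (m * c) / m := by
  have hder : ∀ x ∈ Set.Iic c, HasDerivAt (fun s => Real.exp (m * s) / m) (Real.exp (m * x)) x := by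
    intro x _
    have h1 : HasDerivAt (fun s : ℝ => m * s) m x := by
      simpa using (hasDerivAt_id x).const_mul m
    have h2 : HasDerivAt (fun s => Real.exp (m * s)) (Real.exp (m * x) * m) x :=
      (Real.hasDerivAt_exp (m * x)).comp x h1
    have := h2.div_const m
    simpa [mul_div_assoc, mul_div_cancel_right₀ _ hm.ne'] using this
  have htend : Tendsto (fun s => Real.exp (m * s) / m) atBot (nhds 0) := by
    have h0 : Tendsto (fun s : ℝ => Real.exp (m * s)) atBot (nhds 0) :=
      Real.tendsto_exp_comp_nhds_zero.mpr (aux_mul_atBot hm)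
    simpa using h0.div_const m
  have := integral_Iic_of_hasDerivAt_of_tendsto' hder (aux_exp_intOn m c hm) htend
  rw [this]; ring

lemma aux_shift (F : ℝ → ℝ) (c t : ℝ) :
    ∫ s in Set.Iic t, F s = ∫ s in Set.Iic (t - c), F (s + c) := by
  rw [← (measurePreserving_add_right volume c).setIntegral_preimage_emb
    (measurableEmbedding_addRight c)]
  congr 1
  ext x; simp [le_sub_iff_add_le]

lemma aux_shift_int {F : ℝ → ℝ} {c t : ℝ} (h : IntegrableOn F (Set.Iic t)) :
    IntegrableOn (fun s => F (s + c)) (Set.Iic (t - c)) := by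
  have h2 := ((measurePreserving_add_right volume c).integrableOn_comp_preimage
    (measurableEmbedding_addRight c) (f := F) (s := Set.Iic t)).mpr h
  have : (fun x : ℝ => x + c) ⁻¹' Set.Iic t = Set.Iic (t - c) := by
    ext x; simp [le_sub_iff_add_le]
  rwa [this] at h2

lemma aux_exp_diff {x y M : ℝ} (hx : Real.exp (-x) ≤ M) (hy : Real.exp (-y) ≤ M) :
    |Real.exp (-x) - Real.exp (-y)| ≤ M * |x - y| := by
  have key : ∀ u v : ℝ, u ≤ v → Real.exp (-u) ≤ M →
      Real.exp (-u) - Real.exp (-v) ≤ M * (v - u) := by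
    intro u v huv hM
    have h1 : Real.exp (-v) = Real.exp (-u) * Real.exp (u - v) := by
      rw [← Real.exp_add]; ring_nf
    have h2 : (u - v) + 1 ≤ Real.exp (u - v) := Real.add_one_le_exp _
    have h3 : (0:ℝ) < Real.exp (-u) := Real.exp_pos _
    nlinarith
  rcases le_total x y with h | h
  · have h5 : Real.exp (-y) ≤ Real.exp (-x) := Real.exp_le_exp.mpr (by linarith)
    rw [abs_of_nonneg (by linarith), abs_of_nonpos (by linarith)]
    have := key x y h hx
    linarith
  · have h5 : Real.exp (-x) ≤ Real.exp (-y) := Real.exp_le_exp.mpr (by linarith)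
    rw [abs_of_nonpos (by linarith), abs_of_nonneg (by linarith)]
    have := key y x h hy
    linarith
lemma aux_uc {g : ℝ → ℝ} (hgc : Continuous g) (hgap : AlmostPeriodic g) :
    ∀ ε > 0, ∃ δ > 0, ∀ u v : ℝ, |u - v| < δ → |g u - g v| < ε := by
  intro ε hε
  obtain ⟨l, hl, htr⟩ := hgap (ε/3) (by linarith)
  have hcomp : UniformContinuousOn g (Set.Icc (-1) (l+1)) :=
    isCompact_Icc.uniformContinuousOn_of_continuous hgc.continuousOn
  rw [Metric.uniformContinuousOn_iff] at hcomp
  obtain ⟨δ₀, hδ₀, hδ⟩ := hcomp (ε/3) (by linarith)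
  refine ⟨min δ₀ 1, by positivity, fun u v huv => ?_⟩
  obtain ⟨τ, hτmem, hτ⟩ := htr (-u)
  have hu1 : u + τ ∈ Set.Icc (-1 : ℝ) (l+1) := by
    simp only [Set.mem_Icc] at hτmem ⊢; constructor <;> linarith
  have hv1 : v + τ ∈ Set.Icc (-1 : ℝ) (l+1) := by
    simp only [Set.mem_Icc] at hτmem ⊢
    have h1 : |u - v| < 1 := huv.trans_le (min_le_right _ _)
    rw [abs_lt] at h1
    constructor <;> linarith
  have hmid : |g (u + τ) - g (v + τ)| < ε/3 := by
    have := hδ (u+τ) hu1 (v+τ) hv1 (by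
      rw [Real.dist_eq]
      have : u + τ - (v + τ) = u - v := by ring
      rw [this]
      exact huv.trans_le (min_le_left _ _))
    rwa [Real.dist_eq] at this
  have h1 := hτ u
  have h2 := hτ v
  calc |g u - g v| = |(g u - g (u+τ)) + (g (u+τ) - g (v+τ)) + (g (v+τ) - g v)| := by ring_nf
    _ ≤ |g u - g (u+τ)| + |g (u+τ) - g (v+τ)| + |g (v+τ) - g v| := by
        exact (abs_add_le _ _).trans (by gcongr; exact abs_add_le _ _)
    _ < ε := by rw [abs_sub_comm (g u)] at *; linarith

lemma aux_net {g : ℝ → ℝ} (hgc : Continuous g) (hgap : AlmostPeriodic g) :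
    ∀ ε > 0, ∃ (n : ℕ) (s : Fin (n+1) → ℝ), ∀ α : ℝ, ∃ i, ∀ t : ℝ,
      |g (t + α) - g (t + s i)| < ε := by
  intro ε hε
  obtain ⟨δ, hδ, huc⟩ := aux_uc hgc hgap (ε/3) (by linarith)
  obtain ⟨l, hl, htr⟩ := hgap (ε/3) (by linarith)
  refine ⟨⌈2*l/δ⌉₊, fun i => (i : ℝ) * (δ/2), fun α => ?_⟩
  obtain ⟨τ, hτmem, hτ⟩ := htr (-α)
  set u := α + τ with hu
  have hu0 : 0 ≤ u := by simp only [Set.mem_Icc] at hτmem; simp only [hu]; linarith [hτmem.1]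
  have hul : u ≤ l := by simp only [Set.mem_Icc] at hτmem; simp only [hu]; linarith [hτmem.2]
  have hjle : ⌊2*u/δ⌋₊ ≤ ⌈2*l/δ⌉₊ := by
    calc ⌊2*u/δ⌋₊ ≤ ⌊2*l/δ⌋₊ := Nat.floor_le_floor (by gcongr)
      _ ≤ ⌈2*l/δ⌉₊ := Nat.floor_le_ceil _
  refine ⟨⟨⌊2*u/δ⌋₊, Nat.lt_succ_of_le hjle⟩, fun t => ?_⟩
  have hfl : (⌊2*u/δ⌋₊ : ℝ) * (δ/2) ≤ u := by
    have h1 : (⌊2*u/δ⌋₊ : ℝ) ≤ 2*u/δ := Nat.floor_le (by positivity)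
    calc (⌊2*u/δ⌋₊ : ℝ) * (δ/2) ≤ (2*u/δ) * (δ/2) := by gcongr
      _ = u := by field_simp
  have hfl2 : u < (⌊2*u/δ⌋₊ : ℝ) * (δ/2) + δ/2 := by
    have h1 : 2*u/δ < ⌊2*u/δ⌋₊ + 1 := Nat.lt_floor_add_one _
    have h2 : 2*u/δ * (δ/2) < ((⌊2*u/δ⌋₊ : ℝ) + 1) * (δ/2) := by gcongr
    have h3 : 2*u/δ * (δ/2) = u := by field_simp
    linarith [h2, h3.symm.le]
  have hnear : |(t + u) - (t + (⌊2*u/δ⌋₊ : ℝ) * (δ/2))| < δ := by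
    rw [show (t + u) - (t + (⌊2*u/δ⌋₊ : ℝ) * (δ/2)) = u - (⌊2*u/δ⌋₊ : ℝ) * (δ/2) by ring]
    rw [abs_of_nonneg (by linarith)]; linarith
  have h1 := hτ (t + α)
  have h2 := huc (t + u) (t + (⌊2*u/δ⌋₊ : ℝ) * (δ/2)) hnear
  have h3 : t + α + τ = t + u := by rw [hu]; ring
  rw [h3] at h1
  calc |g (t + α) - g (t + (⌊2*u/δ⌋₊:ℝ) * (δ/2))|
      = |(g (t + α) - g (t + u)) + (g (t + u) - g (t + (⌊2*u/δ⌋₊:ℝ) * (δ/2)))| := by ring_nf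
    _ ≤ |g (t + α) - g (t + u)| + |g (t + u) - g (t + (⌊2*u/δ⌋₊:ℝ) * (δ/2))| := abs_add_le _ _
    _ < ε := by rw [abs_sub_comm] at h1; linarith

lemma aux_common {g h : ℝ → ℝ} (hgc : Continuous g) (hgap : AlmostPeriodic g)
    (hhc : Continuous h) (hhap : AlmostPeriodic h) :
    ∀ ε > 0, ∃ l > 0, ∀ A : ℝ, ∃ τ ∈ Set.Icc A (A + l),
      (∀ t : ℝ, |g (t + τ) - g t| < ε) ∧ (∀ t : ℝ, |h (t + τ) - h t| < ε) := by
  intro ε hε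
  obtain ⟨n, s, hs⟩ := aux_net hgc hgap (ε/2) (by linarith)
  obtain ⟨n', r, hr⟩ := aux_net hhc hhap (ε/2) (by linarith)
  classical
  set Q : Fin (n+1) × Fin (n'+1) → Prop := fun p =>
    ∃ α : ℝ, (∀ t, |g (t + α) - g (t + s p.1)| < ε/2) ∧
      (∀ t, |h (t + α) - h (t + r p.2)| < ε/2) with hQ
  set w : Fin (n+1) × Fin (n'+1) → ℝ := fun p => if hp : Q p then hp.choose else 0 with hw
  set M : ℝ := Finset.univ.sup' Finset.univ_nonempty (fun p => |w p|) with hM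
  have hM0 : 0 ≤ M := by
    have h0 := Finset.le_sup' (fun p => |w p|)
      (Finset.mem_univ (default : Fin (n+1) × Fin (n'+1)))
    exact le_trans (abs_nonneg _) h0
  refine ⟨2*M + 1, by linarith, fun A => ?_⟩
  set β := A + M + 1/2 with hβ
  obtain ⟨i, hi⟩ := hs β
  obtain ⟨j, hj⟩ := hr β
  have hQp : Q (i, j) := ⟨β, hi, hj⟩
  set α₀ := w (i, j) with hα₀
  have hα₀spec : (∀ t, |g (t + α₀) - g (t + s i)| < ε/2) ∧
      (∀ t, |h (t + α₀) - h (t + r j)| < ε/2) := by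
    rw [hα₀, hw]; simp only [dif_pos hQp]; exact hQp.choose_spec
  have hα₀M : |α₀| ≤ M := Finset.le_sup' (fun p => |w p|) (Finset.mem_univ (i, j))
  refine ⟨β - α₀, ?_, ?_, ?_⟩
  · rw [abs_le] at hα₀M
    constructor <;> simp only [hβ] <;> linarith [hα₀M.1, hα₀M.2]
  · intro t
    have h1 := hi (t - α₀)
    have h2 := hα₀spec.1 (t - α₀)
    have e1 : t - α₀ + β = t + (β - α₀) := by ring
    have e2 : t - α₀ + α₀ = t := by ring
    rw [e1] at h1; rw [e2] at h2
    rw [abs_sub_comm] at h2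
    calc |g (t + (β - α₀)) - g t|
        ≤ |g (t + (β - α₀)) - g (t - α₀ + s i)| + |g (t - α₀ + s i) - g t| := abs_sub_le _ _ _
      _ < ε := by linarith
  · intro t
    have h1 := hj (t - α₀)
    have h2 := hα₀spec.2 (t - α₀)
    have e1 : t - α₀ + β = t + (β - α₀) := by ring
    have e2 : t - α₀ + α₀ = t := by ring
    rw [e1] at h1; rw [e2] at h2
    rw [abs_sub_comm] at h2
    calc |h (t + (β - α₀)) - h t|
        ≤ |h (t + (β - α₀)) - h (t - α₀ + r j)| + |h (t - α₀ + r j) - h t| := abs_sub_le _ _ _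
      _ < ε := by linarith

set_option maxHeartbeats 1000000 in
theorem stmt13 (a f : ℝ → ℝ)
    (hac : Continuous a) (haap : AlmostPeriodic a) (ham : ∃ m > 0, ∀ t, m ≤ a t)
    (hfc : Continuous f) (hfb : ∃ C, ∀ t, |f t| ≤ C) (hfap : AlmostPeriodic f) :
    AlmostPeriodic (fun t => ∫ s in Set.Iic t, Real.exp (-(∫ u in s..t, a u)) * f s) ∧
    (∀ t : ℝ, HasDerivAt (fun t => ∫ s in Set.Iic t, Real.exp (-(∫ u in s..t, a u)) * f s)
      (-a t * (∫ s in Set.Iic t, Real.exp (-(∫ u in s..t, a u)) * f s) + f t) t) ∧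
    ∀ y : ℝ → ℝ, (∃ C, ∀ t, |y t| ≤ C) →
      (∀ t : ℝ, HasDerivAt y (-a t * y t + f t) t) →
      y = fun t => ∫ s in Set.Iic t, Real.exp (-(∫ u in s..t, a u)) * f s := by
  obtain ⟨m, hm, hma⟩ := ham
  obtain ⟨C, hC⟩ := hfb
  have hC0 : 0 ≤ C := le_trans (abs_nonneg _) (hC 0)
  set P : ℝ → ℝ := fun t => ∫ u in (0:ℝ)..t, a u with hPdef
  have haint : ∀ s t : ℝ, IntervalIntegrable a volume s t := fun s t => hac.intervalIntegrable s t
  have hPder : ∀ t, HasDerivAt P (a t) t := fun t =>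
    intervalIntegral.integral_hasDerivAt_right (haint 0 t)
      (hac.stronglyMeasurableAtFilter volume _) hac.continuousAt
  have hPc : Continuous P := continuous_iff_continuousAt.mpr fun t => (hPder t).continuousAt
  have hsub : ∀ s t : ℝ, (∫ u in s..t, a u) = P t - P s := by
    intro s t
    rw [hPdef, ← intervalIntegral.integral_interval_sub_left (haint 0 t) (haint 0 s)]
  have hE1 : ∀ s t : ℝ, s ≤ t → m * (t - s) ≤ ∫ u in s..t, a u := by
    intro s t hst
    have h1 : (∫ _ in s..t, (m:ℝ)) ≤ ∫ u in s..t, a u :=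
      intervalIntegral.integral_mono_on hst intervalIntegrable_const (haint s t)
        (fun u _ => hma u)
    rw [intervalIntegral.integral_const, smul_eq_mul] at h1
    linarith [h1]
  have hE2 : ∀ s t : ℝ, s ≤ t → Real.exp (-(∫ u in s..t, a u)) ≤ Real.exp (m * (s - t)) := by
    intro s t hst
    apply Real.exp_le_exp.mpr
    have := hE1 s t hst; linarith
  have hKcont : ∀ t, Continuous (fun s => Real.exp (-(∫ u in s..t, a u)) * f s) := by
    intro t
    have he : (fun s => Real.exp (-(∫ u in s..t, a u)) * f s)
        = fun s => Real.exp (P s - P t) * f s := by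
      funext s; rw [hsub s t, neg_sub]
    rw [he]
    exact (Real.continuous_exp.comp (hPc.sub continuous_const)).mul hfc
  have hexp_shift : ∀ (k c : ℝ), (fun s : ℝ => Real.exp (k*(s - c)))
      = fun s => Real.exp (-(k*c)) * Real.exp (k*s) := by
    intro k c; funext s; rw [← Real.exp_add]; ring_nf
  have hIexp : ∀ (k t c : ℝ), 0 < k →
      IntegrableOn (fun s => Real.exp (k*(s - c))) (Set.Iic t) := by
    intro k t c hk; rw [hexp_shift]; exact (aux_exp_intOn k t hk).const_mul _
  have hVexp : ∀ (k t : ℝ), 0 < k → ∫ s in Set.Iic t, Real.exp (k*(s - t)) = 1/k := by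
    intro k t hk
    rw [hexp_shift, MeasureTheory.integral_const_mul, aux_exp_intVal k t hk,
      ← mul_div_assoc, ← Real.exp_add, neg_add_cancel, Real.exp_zero]
  have hE3 : ∀ t, IntegrableOn (fun s => Real.exp (-(∫ u in s..t, a u)) * f s) (Set.Iic t) := by
    intro t
    refine Integrable.mono' (((hIexp m t t hm).const_mul C))
      ((hKcont t).aestronglyMeasurable.restrict) ?_
    rw [ae_restrict_iff' measurableSet_Iic]
    filter_upwards with s hs
    rw [Real.norm_eq_abs, abs_mul, abs_of_pos (Real.exp_pos _)]
    have h1 := hE2 s t hs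
    have h2 := hC s
    have := Real.exp_pos (m*(s-t))
    nlinarith [abs_nonneg (f s), (Real.exp_pos (-(∫ u in s..t, a u))).le]
  have hxb : ∀ t, |∫ s in Set.Iic t, Real.exp (-(∫ u in s..t, a u)) * f s| ≤ C/m := by
    intro t
    have hb : ‖∫ s in Set.Iic t, Real.exp (-(∫ u in s..t, a u)) * f s‖
        ≤ ∫ s in Set.Iic t, C * Real.exp (m*(s - t)) := by
      refine MeasureTheory.norm_integral_le_of_norm_le ((hIexp m t t hm).const_mul C) ?_
      rw [ae_restrict_iff' measurableSet_Iic]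
      filter_upwards with s hs
      rw [Real.norm_eq_abs, abs_mul, abs_of_pos (Real.exp_pos _)]
      have h1 := hE2 s t hs
      have h2 := hC s
      nlinarith [abs_nonneg (f s), (Real.exp_pos (-(∫ u in s..t, a u))).le]
    rw [Real.norm_eq_abs] at hb
    rwa [MeasureTheory.integral_const_mul, hVexp m t hm, mul_one_div] at hb
  -- the transformed representation
  set G : ℝ → ℝ := fun t => ∫ s in Set.Iic t, Real.exp (P s) * f s with hGdef
  have hGint : ∀ t, IntegrableOn (fun s => Real.exp (P s) * f s) (Set.Iic t) := by
    intro t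
    have he : (fun s => Real.exp (P s) * f s)
        = fun s => Real.exp (P t) * (Real.exp (-(∫ u in s..t, a u)) * f s) := by
      funext s; rw [hsub s t, ← mul_assoc, ← Real.exp_add]; ring_nf
    rw [he]; exact (hE3 t).const_mul _
  have hGder : ∀ t, HasDerivAt G (Real.exp (P t) * f t) t := by
    intro t
    have hcont : Continuous fun s => Real.exp (P s) * f s :=
      (Real.continuous_exp.comp hPc).mul hfc
    have hH : ∀ y, G y = G t + ∫ s in t..y, Real.exp (P s) * f s := by
      intro y
      have h0 := intervalIntegral.integral_Iic_sub_Iic (hGint t) (hGint y)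
      rw [hGdef]; dsimp only; linarith
    have hder : HasDerivAt (fun y => G t + ∫ s in t..y, Real.exp (P s) * f s)
        (Real.exp (P t) * f t) t := by
      have h2 := intervalIntegral.integral_hasDerivAt_right (hcont.intervalIntegrable t t)
        (hcont.stronglyMeasurableAtFilter volume _) hcont.continuousAt
      exact h2.const_add (G t)
    exact (funext hH).symm ▸ hder
  have hxeq : (fun t => ∫ s in Set.Iic t, Real.exp (-(∫ u in s..t, a u)) * f s)
      = fun t => Real.exp (-(P t)) * G t := by
    funext t
    have he : (fun s => Real.exp (-(∫ u in s..t, a u)) * f s)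
        = fun s => Real.exp (-(P t)) * (Real.exp (P s) * f s) := by
      funext s; rw [hsub s t, ← mul_assoc, ← Real.exp_add]; ring_nf
    rw [he, MeasureTheory.integral_const_mul]
  have hexpP1 : ∀ t : ℝ, Real.exp (-(P t)) * Real.exp (P t) = 1 := by
    intro t; rw [← Real.exp_add]; simp
  have hxder : ∀ t, HasDerivAt (fun t => Real.exp (-(P t)) * G t)
      (-a t * (Real.exp (-(P t)) * G t) + f t) t := by
    intro t
    have h1 : HasDerivAt (fun t => Real.exp (-(P t))) (Real.exp (-(P t)) * (-a t)) t :=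
      (Real.hasDerivAt_exp _).comp t ((hPder t).neg)
    have h2 := h1.mul (hGder t)
    refine h2.congr_deriv ?_
    rw [show Real.exp (-(P t)) * (Real.exp (P t) * f t) = f t from by
      rw [← mul_assoc, hexpP1 t, one_mul]]
    ring
  refine ⟨?_, ?_, ?_⟩
  · -- almost periodicity
    intro ε hε
    obtain ⟨R, hR0, hRsm⟩ : ∃ R > 0, C * (2 * Real.exp (-(m*R/2))) * (2/m) < ε/4 := by
      have h1 : Tendsto (fun R : ℝ => -(m*R/2)) atTop atBot := by
        have h2 : Tendsto (fun R : ℝ => (-(m/2)) * R) atTop atBot :=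
          (tendsto_const_mul_atBot_of_neg (by linarith)).mpr tendsto_id
        refine h2.congr fun R => by ring
      have h2 := Real.tendsto_exp_comp_nhds_zero.mpr h1
      have h3 : Tendsto (fun R : ℝ => C * (2 * Real.exp (-(m*R/2))) * (2/m)) atTop (nhds 0) := by
        have := ((h2.const_mul (2:ℝ)).const_mul C).mul_const (2/m)
        simpa using this
      have h4 := h3.eventually_lt_const (show (0:ℝ) < ε/4 by linarith)
      obtain ⟨R, hR1, hR2⟩ := (h4.and (eventually_gt_atTop 0)).exists
      exact ⟨R, hR2, hR1⟩
    set εf := ε * m / 8 with hεf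
    have hεf0 : 0 < εf := by positivity
    set εa := ε * m / (16 * R * (C+1)) with hεa
    have hεa0 : 0 < εa := by positivity
    have hcεaR : C * (εa * R) * (2/m) < ε/4 := by
      have he : C * (εa * R) * (2/m) = ε * (C / (8*(C+1))) := by
        rw [hεa]; field_simp; ring
      rw [he]
      have h5 : C / (8*(C+1)) < 1/4 := by
        rw [div_lt_div_iff₀ (by linarith) (by norm_num)]; linarith
      calc ε * (C / (8*(C+1))) < ε * (1/4) := by
            exact mul_lt_mul_of_pos_left h5 hε
        _ = ε/4 := by ring
    obtain ⟨l, hl0, hcom⟩ := aux_common hac haap hfc hfap (min εa εf) (lt_min hεa0 hεf0)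
    refine ⟨l, hl0, fun A => ?_⟩
    obtain ⟨τ, hτmem, hτa, hτf⟩ := hcom A
    refine ⟨τ, hτmem, fun t => ?_⟩
    set B := 2 * Real.exp (-(m*R/2)) + εa * R with hB
    have hB0 : 0 ≤ B := by positivity
    have hshift := aux_shift (fun s => Real.exp (-(∫ u in s..(t+τ), a u)) * f s) τ (t+τ)
    rw [show t+τ-τ = t by ring] at hshift
    have hint1 : IntegrableOn
        (fun s => Real.exp (-(∫ u in (s+τ)..(t+τ), a u)) * f (s+τ)) (Set.Iic t) := by
      have h0 := aux_shift_int (hE3 (t+τ)) (c := τ)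
      rw [show t+τ-τ = t by ring] at h0
      exact h0
    have hdiff : (∫ s in Set.Iic (t+τ), Real.exp (-(∫ u in s..(t+τ), a u)) * f s)
        - (∫ s in Set.Iic t, Real.exp (-(∫ u in s..t, a u)) * f s)
        = ∫ s in Set.Iic t, (Real.exp (-(∫ u in (s+τ)..(t+τ), a u)) * f (s+τ)
          - Real.exp (-(∫ u in s..t, a u)) * f s) := by
      rw [hshift, ← MeasureTheory.integral_sub hint1 (hE3 t)]
    have hpt : ∀ s ∈ Set.Iic t,
        |Real.exp (-(∫ u in (s+τ)..(t+τ), a u)) * f (s+τ)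
          - Real.exp (-(∫ u in s..t, a u)) * f s|
        ≤ εf * Real.exp (m*(s-t)) + C * B * Real.exp ((m/2)*(s-t)) := by
      intro s hs
      have hst : s ≤ t := hs
      set I₁ := ∫ u in (s+τ)..(t+τ), a u with hI₁
      set I₀ := ∫ u in s..t, a u with hI₀
      have h1 : Real.exp (-I₁) ≤ Real.exp (m*(s-t)) := by
        have h := hE2 (s+τ) (t+τ) (by linarith)
        rw [show (s+τ)-(t+τ) = s - t by ring] at h
        exact h
      have h0 : Real.exp (-I₀) ≤ Real.exp (m*(s-t)) := hE2 s t hst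
      have hdI : |I₁ - I₀| ≤ εa * (t - s) := by
        have hci : Continuous fun u => a (u + τ) := hac.comp (continuous_id.add continuous_const)
        have he1 : I₁ = ∫ u in s..t, a (u + τ) :=
          (intervalIntegral.integral_comp_add_right a τ).symm
        have he2 : I₁ - I₀ = ∫ u in s..t, (a (u+τ) - a u) := by
          rw [he1, hI₀, ← intervalIntegral.integral_sub (hci.intervalIntegrable s t) (haint s t)]
        rw [he2]
        have hb : ‖∫ u in s..t, (a (u+τ) - a u)‖ ≤ εa * |t - s| := by
          refine intervalIntegral.norm_integral_le_of_norm_le_const fun u _ => ?_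
          rw [Real.norm_eq_abs]
          exact le_of_lt (lt_of_lt_of_le (hτa u) (min_le_left _ _))
        rw [Real.norm_eq_abs] at hb
        rw [abs_of_nonneg (show (0:ℝ) ≤ t - s from by linarith)] at hb
        exact hb
      have hhalf : Real.exp (m*(s-t)) ≤ Real.exp ((m/2)*(s-t)) := by
        apply Real.exp_le_exp.mpr; nlinarith
      have hf1 : |f (s+τ) - f s| ≤ εf :=
        le_of_lt (lt_of_lt_of_le (hτf s) (min_le_right _ _))
      have hfirst : |Real.exp (-I₁) * (f (s+τ) - f s)| ≤ εf * Real.exp (m*(s-t)) := by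
        rw [abs_mul, abs_of_pos (Real.exp_pos _)]
        calc Real.exp (-I₁) * |f (s+τ) - f s| ≤ Real.exp (m*(s-t)) * εf := by
              exact mul_le_mul h1 hf1 (abs_nonneg _) (Real.exp_pos _).le
          _ = εf * Real.exp (m*(s-t)) := by ring
      have hsecond : |(Real.exp (-I₁) - Real.exp (-I₀)) * f s|
          ≤ C * B * Real.exp ((m/2)*(s-t)) := by
        rw [abs_mul]
        have hdb : |Real.exp (-I₁) - Real.exp (-I₀)| ≤ B * Real.exp ((m/2)*(s-t)) := by
          by_cases hsR : R ≤ t - s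
          · have hb1 : |Real.exp (-I₁) - Real.exp (-I₀)| ≤ 2 * Real.exp (m*(s-t)) := by
              have h9 := abs_sub (Real.exp (-I₁)) (Real.exp (-I₀))
              rw [abs_of_pos (Real.exp_pos _), abs_of_pos (Real.exp_pos _)] at h9
              linarith
            have hb2 : Real.exp (m*(s-t))
                ≤ Real.exp (-(m*R/2)) * Real.exp ((m/2)*(s-t)) := by
              rw [← Real.exp_add]
              apply Real.exp_le_exp.mpr; nlinarith
            calc |Real.exp (-I₁) - Real.exp (-I₀)| ≤ 2 * Real.exp (m*(s-t)) := hb1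
              _ ≤ 2 * (Real.exp (-(m*R/2)) * Real.exp ((m/2)*(s-t))) := by linarith
              _ ≤ B * Real.exp ((m/2)*(s-t)) := by
                  rw [hB]; nlinarith [Real.exp_pos ((m/2)*(s-t)), hεa0.le, hR0.le,
                    mul_nonneg hεa0.le hR0.le]
          · push_neg at hsR
            have hb1 := aux_exp_diff h1 h0
            have hb2 : Real.exp (m*(s-t)) * |I₁ - I₀| ≤ Real.exp ((m/2)*(s-t)) * (εa * R) := by
              apply mul_le_mul hhalf _ (abs_nonneg _) (Real.exp_pos _).le
              calc |I₁ - I₀| ≤ εa * (t - s) := hdI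
                _ ≤ εa * R := by nlinarith
            calc |Real.exp (-I₁) - Real.exp (-I₀)| ≤ Real.exp (m*(s-t)) * |I₁ - I₀| := hb1
              _ ≤ Real.exp ((m/2)*(s-t)) * (εa * R) := hb2
              _ ≤ B * Real.exp ((m/2)*(s-t)) := by
                  rw [hB]; nlinarith [Real.exp_pos ((m/2)*(s-t)), (Real.exp_pos (-(m*R/2))).le]
        calc |Real.exp (-I₁) - Real.exp (-I₀)| * |f s|
            ≤ (B * Real.exp ((m/2)*(s-t))) * C := by
              exact mul_le_mul hdb (hC s) (abs_nonneg _)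
                (by positivity)
          _ = C * B * Real.exp ((m/2)*(s-t)) := by ring
      calc |Real.exp (-I₁) * f (s+τ) - Real.exp (-I₀) * f s|
          = |Real.exp (-I₁) * (f (s+τ) - f s) + (Real.exp (-I₁) - Real.exp (-I₀)) * f s| := by
            ring_nf
        _ ≤ |Real.exp (-I₁) * (f (s+τ) - f s)| + |(Real.exp (-I₁) - Real.exp (-I₀)) * f s| :=
            abs_add_le _ _
        _ ≤ εf * Real.exp (m*(s-t)) + C * B * Real.exp ((m/2)*(s-t)) := by
            linarith
    have hm2 : (0:ℝ) < m/2 := by linarith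
    have hgbint1 : IntegrableOn (fun s => Real.exp (m*(s - t))) (Set.Iic t) := hIexp m t t hm
    have hgbint2 : IntegrableOn (fun s => Real.exp ((m/2)*(s - t))) (Set.Iic t) :=
      hIexp (m/2) t t hm2
    have hnorm : |∫ s in Set.Iic t, (Real.exp (-(∫ u in (s+τ)..(t+τ), a u)) * f (s+τ)
          - Real.exp (-(∫ u in s..t, a u)) * f s)|
        ≤ ∫ s in Set.Iic t,
          (εf * Real.exp (m*(s-t)) + C * B * Real.exp ((m/2)*(s-t))) := by
      rw [← Real.norm_eq_abs]
      refine MeasureTheory.norm_integral_le_of_norm_le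
        ((hgbint1.const_mul εf).add (hgbint2.const_mul (C*B))) ?_
      rw [ae_restrict_iff' measurableSet_Iic]
      filter_upwards with s hs
      rw [Real.norm_eq_abs]
      exact hpt s hs
    have hval : (∫ s in Set.Iic t,
          (εf * Real.exp (m*(s-t)) + C * B * Real.exp ((m/2)*(s-t))))
        = εf * (1/m) + C * B * (1/(m/2)) := by
      rw [MeasureTheory.integral_add (hgbint1.const_mul εf) (hgbint2.const_mul (C*B)),
        MeasureTheory.integral_const_mul, MeasureTheory.integral_const_mul,
        hVexp m t hm, hVexp (m/2) t hm2]
    have hval2 : εf * (1/m) = ε/8 := by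
      rw [hεf]; field_simp
    have hval3 : C * B * (1/(m/2)) = C * (2 * Real.exp (-(m*R/2))) * (2/m) + C * (εa*R) * (2/m) := by
      rw [hB]; field_simp
    simp only
    calc |(∫ s in Set.Iic (t+τ), Real.exp (-(∫ u in s..(t+τ), a u)) * f s)
          - (∫ s in Set.Iic t, Real.exp (-(∫ u in s..t, a u)) * f s)|
        = |∫ s in Set.Iic t, (Real.exp (-(∫ u in (s+τ)..(t+τ), a u)) * f (s+τ)
          - Real.exp (-(∫ u in s..t, a u)) * f s)| := by rw [hdiff]
      _ ≤ εf * (1/m) + C * B * (1/(m/2)) := by rw [← hval]; exact hnorm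
      _ < ε := by rw [hval2, hval3]; linarith
  · -- derivative
    intro t
    rw [hxeq]
    have hval : (∫ s in Set.Iic t, Real.exp (-(∫ u in s..t, a u)) * f s)
        = Real.exp (-(P t)) * G t := by
      exact congrFun hxeq t
    rw [hval]
    exact hxder t
  · -- uniqueness
    intro y ⟨Cy, hCy⟩ hyder
    rw [hxeq]
    have hzder : ∀ t, HasDerivAt (fun t => y t - Real.exp (-(P t)) * G t)
        (-a t * (y t - Real.exp (-(P t)) * G t)) t := by
      intro t
      have := (hyder t).sub (hxder t)
      exact this.congr_deriv (by ring)
    have hwder : ∀ t, HasDerivAt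
        (fun t => (y t - Real.exp (-(P t)) * G t) * Real.exp (P t)) 0 t := by
      intro t
      have hPe : HasDerivAt (fun t => Real.exp (P t)) (Real.exp (P t) * a t) t :=
        (Real.hasDerivAt_exp _).comp t (hPder t)
      have := (hzder t).mul hPe
      exact this.congr_deriv (by ring)
    have hwconst : ∀ t : ℝ, (y t - Real.exp (-(P t)) * G t) * Real.exp (P t)
        = (y 0 - Real.exp (-(P 0)) * G 0) * Real.exp (P 0) :=
      fun t => is_const_of_deriv_eq_zero (fun s => (hwder s).differentiableAt)
        (fun s => (hwder s).deriv) t 0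
    have hP0 : P 0 = 0 := by rw [hPdef]; simp
    set z0 : ℝ := y 0 - Real.exp (-(P 0)) * G 0 with hz0
    have hzt : ∀ t, y t - Real.exp (-(P t)) * G t = z0 * Real.exp (-(P t)) := by
      intro t
      have h1 := hwconst t
      rw [hP0] at h1; simp only [Real.exp_zero, mul_one] at h1
      rw [← h1, mul_assoc, mul_comm (Real.exp (P t)), hexpP1 t, mul_one]
    have hzb : ∀ t, |y t - Real.exp (-(P t)) * G t| ≤ Cy + C/m := by
      intro t
      have h1 := hCy t
      have h2 := hxb t
      rw [congrFun hxeq t] at h2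
      calc |y t - Real.exp (-(P t)) * G t| ≤ |y t| + |Real.exp (-(P t)) * G t| := abs_sub _ _
        _ ≤ Cy + C/m := add_le_add h1 h2
    have hz00 : z0 = 0 := by
      by_contra hne
      have habs : 0 < |z0| := abs_pos.mpr hne
      have hKb : ∀ t : ℝ, t ≤ 0 → |z0| ≤ (Cy + C/m) * Real.exp (m * t) := by
        intro t ht
        have h1 := hzb t
        rw [hzt t] at h1
        have h2 : P t ≤ m * t := by
          have h3 := hE1 t 0 ht
          have h4 : (∫ u in t..(0:ℝ), a u) = P 0 - P t := hsub t 0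
          rw [hP0] at h4
          linarith
        have h5 : Real.exp (-(m*t)) ≤ Real.exp (-(P t)) := Real.exp_le_exp.mpr (by linarith)
        rw [abs_mul, abs_of_pos (Real.exp_pos _)] at h1
        have h6 : |z0| * Real.exp (-(m*t)) ≤ |z0| * Real.exp (-(P t)) := by
          exact mul_le_mul_of_nonneg_left h5 (abs_nonneg _)
        have h7 : |z0| * Real.exp (-(m*t)) ≤ Cy + C/m := le_trans h6 h1
        have h8 : Real.exp (-(m*t)) * Real.exp (m*t) = 1 := by rw [← Real.exp_add]; simp
        nlinarith [Real.exp_pos (m*t), Real.exp_pos (-(m*t))]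
      have htend : Tendsto (fun t : ℝ => (Cy + C/m) * Real.exp (m * t)) atBot (nhds 0) := by
        have h0 : Tendsto (fun t : ℝ => Real.exp (m * t)) atBot (nhds 0) :=
          Real.tendsto_exp_comp_nhds_zero.mpr (aux_mul_atBot hm)
        simpa using h0.const_mul (Cy + C/m)
      have hev : ∀ᶠ t : ℝ in atBot, (Cy + C/m) * Real.exp (m * t) < |z0| :=
        htend.eventually_lt_const habs
      obtain ⟨t, ht1, ht2⟩ := (hev.and (eventually_le_atBot 0)).exists
      exact absurd (hKb t ht2) (not_le.mpr ht1)
    funext t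
    have := hzt t
    rw [hz00, zero_mul] at this
    linarith
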